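/- Special case of Proposition 1 (equal impairment levels): Let N ≥ 1, let X_1, …, X_N be independent rate-1 exponential random variables, let γ̃ > 0, let c ≥ 0, let r_th > 0 with γ_th = 2^{r_th} − 1, and suppose b = 1 − c·γ_th > 0. Define the SNDR γ = (γ̃ ∑_{i=1}^N X_i)/(γ̃ c ∑_{i=1}^N X_i + 1). Then P(log₂(1 + γ) ≤ r_th) = 1 − ∑_{k=0}^{N−1} (γ_th/(γ̃ b))^k/(k!) · exp(−γ_th/(γ̃ b)). -/

import Mathlib

open MeasureTheory ProbabilityTheory Finset

namespace ErlangAux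

open Real Set

noncomputable def erlangReal (N : ℕ) (t : ℝ) : ℝ :=
  if 0 ≤ t then 1 - (∑ k ∈ range N, t ^ k / (Nat.factorial k : ℝ)) * Real.exp (-t) else 0

lemma measurable_erlangReal (N : ℕ) : Measurable (erlangReal N) := by
  unfold erlangReal
  exact Measurable.ite measurableSet_Ici (by fun_prop) measurable_const

lemma erlangReal_nonneg (N : ℕ) (t : ℝ) : 0 ≤ erlangReal N t := by
  unfold erlangReal
  split_ifs with h
  · have h1 : ∑ k ∈ range N, t ^ k / (Nat.factorial k : ℝ) ≤ Real.exp t :=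
      Real.sum_le_exp_of_nonneg h N
    have h2 : (∑ k ∈ range N, t ^ k / (Nat.factorial k : ℝ)) * Real.exp (-t)
        ≤ Real.exp t * Real.exp (-t) := by
      apply mul_le_mul_of_nonneg_right h1 (Real.exp_nonneg _)
    rw [← Real.exp_add] at h2
    simp at h2
    linarith
  · exact le_refl 0

lemma erlangReal_le_one (N : ℕ) (t : ℝ) : erlangReal N t ≤ 1 := by
  unfold erlangReal
  split_ifs with h
  · have : 0 ≤ (∑ k ∈ range N, t ^ k / (Nat.factorial k : ℝ)) * Real.exp (-t) := by
      apply mul_nonneg _ (Real.exp_nonneg _)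
      apply Finset.sum_nonneg
      intro k _
      positivity
    linarith
  · norm_num

instance : IsProbabilityMeasure (expMeasure 1) := isProbabilityMeasure_expMeasure one_pos

lemma exponentialPDFReal_nonneg' (x : ℝ) : 0 ≤ exponentialPDFReal 1 x :=
  exponentialPDFReal_nonneg one_pos x

lemma integrable_exponentialPDFReal : Integrable (exponentialPDFReal 1) := by
  refine ⟨(measurable_exponentialPDFReal 1).aestronglyMeasurable, ?_⟩
  rw [hasFiniteIntegral_iff_norm]
  have : ∀ x, ENNReal.ofReal ‖exponentialPDFReal 1 x‖ = exponentialPDF 1 x := by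
    intro x
    rw [Real.norm_eq_abs, abs_of_nonneg (exponentialPDFReal_nonneg' x)]
    rfl
  simp_rw [this]
  rw [lintegral_exponentialPDF_eq_one one_pos]
  exact ENNReal.one_lt_top

end ErlangAux

namespace ErlangAux

open Real Set intervalIntegral

lemma measurable_integrand (N : ℕ) (t : ℝ) :
    Measurable (fun x => exponentialPDFReal 1 x * erlangReal N (t - x)) :=
  (measurable_exponentialPDFReal 1).mul
    ((measurable_erlangReal N).comp (measurable_const.sub measurable_id))

lemma integrable_integrand (N : ℕ) (t : ℝ) :
    Integrable (fun x => exponentialPDFReal 1 x * erlangReal N (t - x)) := by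
  refine integrable_exponentialPDFReal.mono
    (measurable_integrand N t).aestronglyMeasurable (ae_of_all _ fun x => ?_)
  rw [Real.norm_eq_abs, Real.norm_eq_abs,
    abs_of_nonneg (mul_nonneg (exponentialPDFReal_nonneg' x) (erlangReal_nonneg N _)),
    abs_of_nonneg (exponentialPDFReal_nonneg' x)]
  calc exponentialPDFReal 1 x * erlangReal N (t - x)
      ≤ exponentialPDFReal 1 x * 1 :=
        mul_le_mul_of_nonneg_left (erlangReal_le_one N _) (exponentialPDFReal_nonneg' x)
    _ = exponentialPDFReal 1 x := mul_one _

lemma exponentialPDFReal_of_neg {x : ℝ} (hx : x < 0) : exponentialPDFReal 1 x = 0 := by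
  unfold exponentialPDFReal gammaPDFReal
  rw [if_neg (not_le.mpr hx)]

lemma exponentialPDFReal_of_nonneg {x : ℝ} (hx : 0 ≤ x) :
    exponentialPDFReal 1 x = Real.exp (-x) := by
  unfold exponentialPDFReal gammaPDFReal
  rw [if_pos hx]
  simp [Real.Gamma_one]

lemma integral_step (N : ℕ) (t : ℝ) :
    ∫ x, exponentialPDFReal 1 x * erlangReal N (t - x) = erlangReal (N + 1) t := by
  by_cases ht : 0 ≤ t
  · rw [← setIntegral_eq_integral_of_forall_compl_eq_zero (s := Icc 0 t)
      (μ := volume) (f := fun x => exponentialPDFReal 1 x * erlangReal N (t - x)) ?_]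
    swap
    · intro x hx
      simp only [Set.mem_Icc, not_and_or, not_le] at hx
      rcases hx with hx | hx
      · rw [exponentialPDFReal_of_neg hx, zero_mul]
      · have h0 : erlangReal N (t - x) = 0 := by
          unfold erlangReal
          rw [if_neg (by linarith)]
        rw [h0, mul_zero]
    rw [integral_Icc_eq_integral_Ioc,
      setIntegral_congr_fun measurableSet_Ioc
        (g := fun x => Real.exp (-x) - Real.exp (-t) * ∑ k ∈ range N,
          (t - x) ^ k / (Nat.factorial k : ℝ)) ?_]
    swap
    · intro x hx
      obtain ⟨hx0, hxt⟩ := hx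
      simp only []
      rw [exponentialPDFReal_of_nonneg hx0.le]
      unfold erlangReal
      rw [if_pos (by linarith : (0:ℝ) ≤ t - x)]
      rw [mul_sub, mul_one, mul_comm ((∑ k ∈ range N, (t - x) ^ k / (Nat.factorial k : ℝ)))
        (Real.exp (-(t-x))), ← mul_assoc, ← Real.exp_add]
      ring_nf
    rw [← intervalIntegral.integral_of_le ht]
    have hint1 : IntervalIntegrable (fun x => Real.exp (-x)) volume 0 t :=
      (Real.continuous_exp.comp continuous_neg).intervalIntegrable 0 t
    have hint2 : IntervalIntegrable (fun x => Real.exp (-t) * ∑ k ∈ range N,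
        (t - x) ^ k / (Nat.factorial k : ℝ)) volume 0 t := by
      apply Continuous.intervalIntegrable
      fun_prop
    rw [intervalIntegral.integral_sub hint1 hint2, intervalIntegral.integral_const_mul]
    have hsum : IntervalIntegrable (fun x => ∑ k ∈ range N,
        (t - x) ^ k / (Nat.factorial k : ℝ)) volume 0 t := by
      apply Continuous.intervalIntegrable; fun_prop
    rw [intervalIntegral.integral_finset_sum (fun k _ => by
      apply Continuous.intervalIntegrable; fun_prop)]
    have h1 : (∫ x in (0:ℝ)..t, Real.exp (-x)) = 1 - Real.exp (-t) := by
      rw [intervalIntegral.integral_comp_neg (fun x => Real.exp x), integral_exp]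
      simp
    have h2 : ∀ k : ℕ, (∫ x in (0:ℝ)..t, (t - x) ^ k / (Nat.factorial k : ℝ))
        = t ^ (k + 1) / ((k + 1) * (Nat.factorial k : ℝ)) := by
      intro k
      have := intervalIntegral.integral_comp_sub_left
        (a := (0:ℝ)) (b := t) (fun u => u ^ k / (Nat.factorial k : ℝ)) t
      simp only [sub_self, sub_zero] at this
      rw [this, intervalIntegral.integral_div, integral_pow]
      simp [div_div]
    simp_rw [h2, h1]
    unfold erlangReal
    rw [if_pos ht, Finset.sum_range_succ']
    simp only [pow_zero, Nat.factorial_zero, Nat.cast_one]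
    have hfac : ∀ k : ℕ, ((Nat.factorial (k + 1) : ℝ)) = (k + 1) * (Nat.factorial k : ℝ) := by
      intro k
      rw [Nat.factorial_succ]
      push_cast
      ring
    have hrw : ∑ k ∈ range N, t ^ (k + 1) / ((Nat.factorial (k + 1)) : ℝ)
        = ∑ k ∈ range N, t ^ (k + 1) / (((k : ℝ) + 1) * (Nat.factorial k : ℝ)) :=
      Finset.sum_congr rfl fun k _ => by rw [hfac k]
    rw [hrw]
    ring
  · have : (fun x => exponentialPDFReal 1 x * erlangReal N (t - x)) = fun _ => (0:ℝ) := by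
      funext x
      rcases lt_or_ge x 0 with hx | hx
      · rw [exponentialPDFReal_of_neg hx, zero_mul]
      · have : erlangReal N (t - x) = 0 := by
          unfold erlangReal
          rw [if_neg (by push_neg at ht; intro h; linarith)]
        rw [this, mul_zero]
    rw [this, MeasureTheory.integral_zero]
    unfold erlangReal
    rw [if_neg ht]

end ErlangAux

namespace ErlangAux

open Real Set

lemma pi_exp_sum_le (N : ℕ) (t : ℝ) :
    Measure.pi (fun _ : Fin N => expMeasure 1) {x | ∑ i, x i ≤ t}
      = ENNReal.ofReal (erlangReal N t) := by
  induction N generalizing t with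
  | zero =>
    have hset : {x : Fin 0 → ℝ | ∑ i, x i ≤ t} = if 0 ≤ t then univ else ∅ := by
      split_ifs with h
      · ext x; simp [h]
      · ext x; simp [h]
    rw [hset]
    unfold erlangReal
    split_ifs with h
    · simp
    · simp
  | succ N ih =>
    have hmp := measurePreserving_piFinSuccAbove (fun _ : Fin (N+1) => expMeasure 1) 0
    set ν := Measure.pi (fun _ : Fin N => expMeasure 1) with hν
    set s : Set (ℝ × (Fin N → ℝ)) := {p | p.1 + ∑ i, p.2 i ≤ t} with hs
    have hsm : MeasurableSet s := by
      apply measurableSet_le _ measurable_const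
      exact measurable_fst.add
        (Finset.measurable_sum _ fun i _ => (measurable_pi_apply i).comp measurable_snd)
    have hpre : (MeasurableEquiv.piFinSuccAbove (fun _ : Fin (N+1) => ℝ) 0) ⁻¹' s
        = {x : Fin (N+1) → ℝ | ∑ i, x i ≤ t} := by
      ext x
      simp only [Set.mem_preimage, MeasurableEquiv.piFinSuccAbove_apply, Set.mem_setOf_eq, hs]
      rw [Fin.sum_univ_succ]
      simp [Fin.succAbove, Fin.tail]
    rw [← hpre, hmp.measure_preimage hsm.nullMeasurableSet, Measure.prod_apply hsm]
    have hslice : ∀ x : ℝ, ν (Prod.mk x ⁻¹' s) = ENNReal.ofReal (erlangReal N (t - x)) := by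
      intro x
      have : Prod.mk x ⁻¹' s = {y : Fin N → ℝ | ∑ i, y i ≤ t - x} := by
        ext y
        simp only [Set.mem_preimage, hs, Set.mem_setOf_eq]
        constructor <;> intro <;> linarith
      rw [this, hν, ih]
    simp_rw [hslice]
    have hexp : expMeasure 1 = volume.withDensity (exponentialPDF 1) := rfl
    have hmg : Measurable fun x : ℝ => ENNReal.ofReal (erlangReal N (t - x)) :=
      (((measurable_erlangReal N).comp (measurable_const.sub measurable_id))).ennreal_ofReal
    have hpdf : exponentialPDF 1 = fun x => ENNReal.ofReal (exponentialPDFReal 1 x) := rfl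
    rw [hexp, hpdf, lintegral_withDensity_eq_lintegral_mul volume
      ((measurable_exponentialPDFReal 1).ennreal_ofReal) hmg]
    have : ∀ x : ℝ, ((fun x => ENNReal.ofReal (exponentialPDFReal 1 x)) * fun x =>
        ENNReal.ofReal (erlangReal N (t - x))) x
        = ENNReal.ofReal (exponentialPDFReal 1 x * erlangReal N (t - x)) := by
      intro x
      simp only [Pi.mul_apply]
      rw [← ENNReal.ofReal_mul (exponentialPDFReal_nonneg' x)]
    simp_rw [this]
    rw [← ofReal_integral_eq_lintegral_ofReal (integrable_integrand N t)
      (ae_of_all _ fun x => mul_nonneg (exponentialPDFReal_nonneg' x) (erlangReal_nonneg N _))]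
    rw [integral_step]

end ErlangAux

namespace ErlangAux

lemma map_fun_eq_pi {Ω : Type*} [MeasurableSpace Ω] (μ : Measure Ω) [IsProbabilityMeasure μ]
    {N : ℕ} (X : Fin N → Ω → ℝ) (hXmeas : ∀ i, Measurable (X i))
    (hXindep : iIndepFun X μ)
    (hXexp : ∀ i, Measure.map (X i) μ = expMeasure 1) :
    Measure.map (fun ω i => X i ω) μ = Measure.pi (fun _ : Fin N => expMeasure 1) := by
  refine (Measure.pi_eq (μ := fun _ : Fin N => expMeasure 1) fun s hs => ?_).symm
  rw [Measure.map_apply (measurable_pi_lambda _ hXmeas) (MeasurableSet.univ_pi hs)]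
  have hpre : (fun ω i => X i ω) ⁻¹' Set.pi Set.univ s = ⋂ i, X i ⁻¹' s i := by
    ext ω; simp [Set.mem_univ_pi]
  rw [hpre, hXindep.meas_iInter fun i => ⟨s i, hs i, rfl⟩]
  refine Finset.prod_congr rfl fun i _ => ?_
  rw [← hXexp i, Measure.map_apply (hXmeas i) (hs i)]

end ErlangAux

open ErlangAux in
/-- Special case of Proposition 1 with equal impairment levels: the outage probability
is the Erlang CDF `1 - ∑_{k=0}^{N-1} (γth/(γ̃ b))^k / k! * exp (-γth/(γ̃ b))`. -/
theorem outage_probability_equal_impairments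
    {Ω : Type*} [MeasurableSpace Ω] (μ : Measure Ω) [IsProbabilityMeasure μ]
    (N : ℕ) (hN : 1 ≤ N)
    (X : Fin N → Ω → ℝ) (hXmeas : ∀ i, Measurable (X i))
    (hXindep : iIndepFun X μ)
    (hXexp : ∀ i, Measure.map (X i) μ = expMeasure 1)
    (γSNR : ℝ) (hγSNR : 0 < γSNR) (c : ℝ) (hc : 0 ≤ c)
    (rth : ℝ) (hrth : 0 < rth) (γth : ℝ) (hγth : γth = 2 ^ rth - 1)
    (b : ℝ) (hb : b = 1 - c * γth) (hbpos : 0 < b)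
    (γ : Ω → ℝ)
    (hγ : ∀ ω, γ ω = (γSNR * ∑ i, X i ω) / (γSNR * c * ∑ i, X i ω + 1)) :
    (μ {ω | Real.logb 2 (1 + γ ω) ≤ rth}).toReal =
      1 - ∑ k ∈ range N, (γth / (γSNR * b)) ^ k / (Nat.factorial k : ℝ) *
        Real.exp (-(γth / (γSNR * b))) := by
  have hγb : 0 < γSNR * b := mul_pos hγSNR hbpos
  have hγthpos : 0 < γth := by
    rw [hγth]
    have h2 : (1:ℝ) < 2 ^ rth := by
      rw [Real.one_lt_rpow_iff_of_pos (by norm_num)]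
      left; exact ⟨one_lt_two, hrth⟩
    linarith
  set t := γth / (γSNR * b) with hT
  have htpos : 0 < t := div_pos hγthpos hγb
  set A : Set Ω := {ω | ∀ i, 0 ≤ X i ω} with hA
  have hAc : μ Aᶜ = 0 := by
    have hAcU : Aᶜ = ⋃ i, {ω | X i ω < 0} := by
      ext ω; simp [hA, not_forall, not_le]
    rw [hAcU]
    apply measure_iUnion_null
    intro i
    have h1 : {ω | X i ω < 0} = X i ⁻¹' Set.Iio 0 := rfl
    rw [h1, ← Measure.map_apply (hXmeas i) measurableSet_Iio, hXexp i]
    show (volume.withDensity (exponentialPDF 1)) (Set.Iio 0) = 0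
    rw [withDensity_apply _ measurableSet_Iio]
    exact lintegral_exponentialPDF_of_nonpos le_rfl
  have hEF : ∀ ω ∈ A, (Real.logb 2 (1 + γ ω) ≤ rth ↔ ∑ i, X i ω ≤ t) := by
    intro ω hω
    have hS0 : 0 ≤ ∑ i, X i ω := Finset.sum_nonneg fun i _ => hω i
    have hd : 0 < γSNR * c * ∑ i, X i ω + 1 := by positivity
    have hγω : 0 ≤ γ ω := by
      rw [hγ ω]
      exact div_nonneg (mul_nonneg hγSNR.le hS0) hd.le
    have h1 : 0 < 1 + γ ω := by linarith
    rw [Real.logb_le_iff_le_rpow one_lt_two h1]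
    have e1 : (1 + γ ω ≤ (2:ℝ) ^ rth) ↔ γ ω ≤ γth := by
      rw [hγth]; constructor <;> intro <;> linarith
    rw [e1, hγ ω, div_le_iff₀ hd, hT, le_div_iff₀ hγb]
    constructor <;> intro h <;> nlinarith [hb, hγSNR, hS0, hγthpos]
  have hset : {ω | Real.logb 2 (1 + γ ω) ≤ rth} ∩ A = {ω | ∑ i, X i ω ≤ t} ∩ A := by
    ext ω
    simp only [Set.mem_inter_iff, Set.mem_setOf_eq]
    constructor
    · rintro ⟨h1, h2⟩; exact ⟨(hEF ω h2).mp h1, h2⟩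
    · rintro ⟨h1, h2⟩; exact ⟨(hEF ω h2).mpr h1, h2⟩
  have hmeq : μ {ω | Real.logb 2 (1 + γ ω) ≤ rth} = μ {ω | ∑ i, X i ω ≤ t} := by
    rw [← measure_inter_conull hAc, hset, measure_inter_conull hAc]
  have hFm : MeasurableSet {x : Fin N → ℝ | ∑ i, x i ≤ t} :=
    measurableSet_le (Finset.measurable_sum _ fun i _ => measurable_pi_apply i) measurable_const
  have hμF : μ {ω | ∑ i, X i ω ≤ t} = ENNReal.ofReal (erlangReal N t) := by
    have hpre : {ω | ∑ i, X i ω ≤ t} = (fun ω i => X i ω) ⁻¹' {x : Fin N → ℝ | ∑ i, x i ≤ t} :=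
      rfl
    rw [hpre, ← Measure.map_apply (measurable_pi_lambda _ hXmeas) hFm,
      map_fun_eq_pi μ X hXmeas hXindep hXexp, pi_exp_sum_le]
  rw [hmeq, hμF, ENNReal.toReal_ofReal (erlangReal_nonneg N t)]
  unfold ErlangAux.erlangReal
  rw [if_pos htpos.le, ← Finset.sum_mul]
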